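/- Let X be an n×p matrix, Yc, YL, YR ∈ ℝⁿ, and let 𝟙 ∈ ℝⁿ be the all-ones vector. Define S(β,θ,δ,λ,μ) = ‖Yc − Xβ‖² + ‖YL − Xβθ − 𝟙λ‖² + ‖YR − Xβδ − 𝟙μ‖². If XᵀX is invertible and (β,θ,δ,λ,μ) is a stationary point of S, then β = (1+θ²+δ²)⁻¹ (XᵀX)⁻¹ [ XᵀYc + θXᵀ(YL − 𝟙λ) + δXᵀ(YR − 𝟙μ) ]. -/

import Mathlib

open Matrix
noncomputable def dotCLM {p : ℕ} (w : Fin p → ℝ) : (Fin p → ℝ) →L[ℝ] ℝ :=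
  LinearMap.toContinuousLinearMap
    { toFun := fun v => w ⬝ᵥ v
      map_add' := fun a b => by simp [dotProduct_add]
      map_smul' := fun c a => by simp [dotProduct_smul] }

@[simp] lemma dotCLM_apply {p : ℕ} (w v : Fin p → ℝ) : dotCLM w v = w ⬝ᵥ v := rfl

lemma hasFDerivAt_selfdot {n : ℕ} (x : Fin n → ℝ) :
    HasFDerivAt (fun v : Fin n → ℝ => v ⬝ᵥ v) (dotCLM ((2:ℝ) • x)) x := by
  have h : ∀ i : Fin n, HasFDerivAt (fun v : Fin n → ℝ => v i * v i)
      ((2 * x i) • (ContinuousLinearMap.proj i : (Fin n → ℝ) →L[ℝ] ℝ)) x := by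
    intro i
    have hp : HasFDerivAt (fun v : Fin n → ℝ => v i)
        (ContinuousLinearMap.proj i : (Fin n → ℝ) →L[ℝ] ℝ) x :=
      (ContinuousLinearMap.proj i : (Fin n → ℝ) →L[ℝ] ℝ).hasFDerivAt
    have := hp.fun_mul hp
    refine this.congr_fderiv ?_
    ext v
    simp [two_mul]
    ring
  have := HasFDerivAt.fun_sum (fun i (_ : i ∈ Finset.univ) => h i)
  refine this.congr_fderiv ?_
  ext v
  simp [dotProduct, Finset.mul_sum]

lemma hasFDerivAt_term {n p : ℕ} (X : Matrix (Fin n) (Fin p) ℝ) (Y w : Fin n → ℝ) (c : ℝ)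
    (β : Fin p → ℝ) :
    HasFDerivAt (fun b : Fin p → ℝ => (Y - c • X.mulVec b - w) ⬝ᵥ (Y - c • X.mulVec b - w))
      (dotCLM (((-2 : ℝ) * c) • Xᵀ.mulVec (Y - c • X.mulVec β - w))) β := by
  set M : (Fin p → ℝ) →L[ℝ] (Fin n → ℝ) := LinearMap.toContinuousLinearMap X.mulVecLin with hM
  have hMa : ∀ b, M b = X.mulVec b := fun b => rfl
  have hu : HasFDerivAt (fun b : Fin p → ℝ => Y - c • X.mulVec b - w) ((-c) • M) β := by
    have h1 : HasFDerivAt (fun b : Fin p → ℝ => c • X.mulVec b) (c • M) β := by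
      have := (M.hasFDerivAt (x := β)).fun_const_smul c
      exact this
    have h2 := ((hasFDerivAt_const Y β).fun_sub h1).fun_sub (hasFDerivAt_const w β)
    refine h2.congr_fderiv ?_
    ext v
    simp
  have hq := hasFDerivAt_selfdot (Y - c • X.mulVec β - w)
  have hcomp := hq.comp β hu
  refine hcomp.congr_fderiv ?_
  ext v
  simp [hMa, mulVec_transpose, dotProduct_mulVec, smul_dotProduct, dotProduct_smul,
    vecMul_transpose, smul_vecMul]
  ring

theorem stmt2 {n p : ℕ} (X : Matrix (Fin n) (Fin p) ℝ) (Yc YL YR : Fin n → ℝ)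
    (S : (Fin p → ℝ) → ℝ → ℝ → ℝ → ℝ → ℝ)
    (hS : ∀ β θ δ lam μ, S β θ δ lam μ =
      (Yc - X.mulVec β) ⬝ᵥ (Yc - X.mulVec β) +
      (YL - θ • X.mulVec β - lam • (1 : Fin n → ℝ)) ⬝ᵥ (YL - θ • X.mulVec β - lam • (1 : Fin n → ℝ)) +
      (YR - δ • X.mulVec β - μ • (1 : Fin n → ℝ)) ⬝ᵥ (YR - δ • X.mulVec β - μ • (1 : Fin n → ℝ)))
    (hinv : IsUnit (Xᵀ * X))
    (β : Fin p → ℝ) (θ δ lam μ : ℝ)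
    (hβ : fderiv ℝ (fun b => S b θ δ lam μ) β = 0)
    (hθ : deriv (fun t => S β t δ lam μ) θ = 0)
    (hδ : deriv (fun t => S β θ t lam μ) δ = 0)
    (hlam : deriv (fun t => S β θ δ t μ) lam = 0)
    (hμ : deriv (fun t => S β θ δ lam t) μ = 0) :
    β = (1 + θ ^ 2 + δ ^ 2)⁻¹ •
      (Xᵀ * X)⁻¹.mulVec
        (Xᵀ.mulVec Yc + θ • Xᵀ.mulVec (YL - lam • (1 : Fin n → ℝ)) +
          δ • Xᵀ.mulVec (YR - μ • (1 : Fin n → ℝ))) := by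
  classical
  set u1 : Fin n → ℝ := Yc - (1:ℝ) • X.mulVec β - 0 with hu1
  set u2 : Fin n → ℝ := YL - θ • X.mulVec β - lam • (1 : Fin n → ℝ) with hu2
  set u3 : Fin n → ℝ := YR - δ • X.mulVec β - μ • (1 : Fin n → ℝ) with hu3
  have h1 := hasFDerivAt_term X Yc 0 1 β
  have h2 := hasFDerivAt_term X YL (lam • (1 : Fin n → ℝ)) θ β
  have h3 := hasFDerivAt_term X YR (μ • (1 : Fin n → ℝ)) δ β
  have htot := (h1.add h2).add h3
  have hFeq : (fun b => S b θ δ lam μ) =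
      (fun b : Fin p → ℝ =>
        ((Yc - (1:ℝ) • X.mulVec b - 0) ⬝ᵥ (Yc - (1:ℝ) • X.mulVec b - 0) +
         (YL - θ • X.mulVec b - lam • (1 : Fin n → ℝ)) ⬝ᵥ (YL - θ • X.mulVec b - lam • (1 : Fin n → ℝ))) +
        (YR - δ • X.mulVec b - μ • (1 : Fin n → ℝ)) ⬝ᵥ (YR - δ • X.mulVec b - μ • (1 : Fin n → ℝ))) := by
    funext b
    rw [hS]
    simp [add_assoc]
  have hD : fderiv ℝ (fun b => S b θ δ lam μ) β =
      (dotCLM (((-2:ℝ)*1) • Xᵀ.mulVec u1) + dotCLM (((-2:ℝ)*θ) • Xᵀ.mulVec u2)) +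
        dotCLM (((-2:ℝ)*δ) • Xᵀ.mulVec u3) := by
    rw [hFeq]
    exact htot.fderiv
  rw [hβ] at hD
  have key : ∀ v : Fin p → ℝ,
      ((((-2:ℝ)*1) • Xᵀ.mulVec u1) + (((-2:ℝ)*θ) • Xᵀ.mulVec u2) + (((-2:ℝ)*δ) • Xᵀ.mulVec u3)) ⬝ᵥ v = 0 := by
    intro v
    have := congrFun (congrArg DFunLike.coe hD.symm) v
    simpa [add_dotProduct] using this
  have hw : (((-2:ℝ)*1) • Xᵀ.mulVec u1) + (((-2:ℝ)*θ) • Xᵀ.mulVec u2) + (((-2:ℝ)*δ) • Xᵀ.mulVec u3) = 0 :=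
    dotProduct_eq_zero _ key
  have hw2 : Xᵀ.mulVec u1 + θ • Xᵀ.mulVec u2 + δ • Xᵀ.mulVec u3 = 0 := by
    funext j
    have h := congrFun hw j
    simp only [Pi.add_apply, Pi.smul_apply, Pi.zero_apply, smul_eq_mul] at h ⊢
    linarith
  have expand : Xᵀ.mulVec u1 + θ • Xᵀ.mulVec u2 + δ • Xᵀ.mulVec u3 =
      (Xᵀ.mulVec Yc + θ • Xᵀ.mulVec (YL - lam • (1 : Fin n → ℝ)) +
        δ • Xᵀ.mulVec (YR - μ • (1 : Fin n → ℝ))) -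
      (1 + θ ^ 2 + δ ^ 2) • (Xᵀ * X).mulVec β := by
    rw [hu1, hu2, hu3]
    simp only [mulVec_sub, mulVec_add, mulVec_smul, mulVec_mulVec, sub_zero, one_smul]
    module
  rw [expand] at hw2
  have hA : Xᵀ.mulVec Yc + θ • Xᵀ.mulVec (YL - lam • (1 : Fin n → ℝ)) +
      δ • Xᵀ.mulVec (YR - μ • (1 : Fin n → ℝ)) = (1 + θ ^ 2 + δ ^ 2) • (Xᵀ * X).mulVec β := by
    have := sub_eq_zero.mp hw2
    exact this
  have hdet : IsUnit (Xᵀ * X).det := (isUnit_iff_isUnit_det _).mp hinv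
  have hfin : (Xᵀ * X)⁻¹.mulVec (Xᵀ.mulVec Yc + θ • Xᵀ.mulVec (YL - lam • (1 : Fin n → ℝ)) +
      δ • Xᵀ.mulVec (YR - μ • (1 : Fin n → ℝ))) = (1 + θ ^ 2 + δ ^ 2) • β := by
    rw [hA, mulVec_smul, mulVec_mulVec, nonsing_inv_mul _ hdet, one_mulVec]
  rw [hfin, smul_smul]
  have hc : (1 : ℝ) + θ ^ 2 + δ ^ 2 ≠ 0 := by positivity
  rw [inv_mul_cancel₀ hc, one_smul]
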